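/- Let f : ℝ^d → ℝ be convex, fix x ∈ ℝ^d, and let g(y) := Df(x)[y] be the one-sided directional derivative at x. Fix y ∈ ℝ^d such that g is differentiable at y. Then for every choice of subgradients v_ε ∈ ∂f(x + εy) for ε > 0, the limit lim_{ε↓0} v_ε exists, is independent of the choice of selections, and belongs to ∂f(x); in fact it equals ∇g(y) shifted appropriately (when normalized so that f(x) = 0, g(y) = 0, ∇g(y) = 0, the limit is 0). -/

import Mathlib

open Set Filter Topology RealInnerProductSpace

noncomputable def dirDeriv {d : ℕ} (f : EuclideanSpace ℝ (Fin d) → ℝ)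
    (x y : EuclideanSpace ℝ (Fin d)) : ℝ :=
  sInf ((fun lam : ℝ => (f (x + lam • y) - f x) / lam) '' Set.Ioi 0)

def IsSubgradientAt {d : ℕ} (f : EuclideanSpace ℝ (Fin d) → ℝ)
    (x v : EuclideanSpace ℝ (Fin d)) : Prop :=
  ∀ z, f z ≥ f x + ⟪v, z - x⟫

variable {d : ℕ}

private lemma lineConvex {f : EuclideanSpace ℝ (Fin d) → ℝ} (hf : ConvexOn ℝ Set.univ f)
    (x z : EuclideanSpace ℝ (Fin d)) :
    ConvexOn ℝ Set.univ (fun t : ℝ => f (x + t • z)) := by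
  have h := hf.comp_affineMap (AffineMap.lineMap x (x + z))
  have he : (fun t : ℝ => f (x + t • z)) = f ∘ (AffineMap.lineMap x (x + z)) := by
    funext t
    show f (x + t • z) = f (AffineMap.lineMap x (x + z) t)
    congr 1
    simp [AffineMap.lineMap_apply]
    module
  rw [he]
  simpa using h

private lemma quot_mono {f : EuclideanSpace ℝ (Fin d) → ℝ} (hf : ConvexOn ℝ Set.univ f)
    (x z : EuclideanSpace ℝ (Fin d)) {a b : ℝ} (ha : 0 < a) (hab : a ≤ b) :
    (f (x + a • z) - f x) / a ≤ (f (x + b • z) - f x) / b := by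
  have h := (lineConvex hf x z).secant_mono (a := 0) (x := a) (y := b)
    (Set.mem_univ 0) (Set.mem_univ a) (Set.mem_univ b) ha.ne' (ha.trans_le hab).ne' hab
  simpa using h

private lemma quot_lower {f : EuclideanSpace ℝ (Fin d) → ℝ} (hf : ConvexOn ℝ Set.univ f)
    (x z : EuclideanSpace ℝ (Fin d)) {a : ℝ} (ha : 0 < a) :
    f x - f (x - z) ≤ (f (x + a • z) - f x) / a := by
  have h := (lineConvex hf x z).secant_mono (a := 0) (x := -1) (y := a)
    (Set.mem_univ 0) (Set.mem_univ (-1)) (Set.mem_univ a) (by norm_num) ha.ne' (by linarith)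
  have hpt : x + (-1 : ℝ) • z = x - z := by module
  rw [hpt] at h
  simp only [zero_smul, add_zero, sub_zero] at h
  rw [div_neg, div_one, neg_sub] at h
  linarith


private lemma quotSet_nonempty (f : EuclideanSpace ℝ (Fin d) → ℝ)
    (x z : EuclideanSpace ℝ (Fin d)) :
    ((fun lam : ℝ => (f (x + lam • z) - f x) / lam) '' Set.Ioi 0).Nonempty :=
  ⟨_, ⟨1, by norm_num, rfl⟩⟩

private lemma quotSet_bdd {f : EuclideanSpace ℝ (Fin d) → ℝ} (hf : ConvexOn ℝ Set.univ f)
    (x z : EuclideanSpace ℝ (Fin d)) :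
    BddBelow ((fun lam : ℝ => (f (x + lam • z) - f x) / lam) '' Set.Ioi 0) := by
  refine ⟨f x - f (x - z), ?_⟩
  rintro _ ⟨a, ha, rfl⟩
  exact quot_lower hf x z ha

private lemma dir_le_quot {f : EuclideanSpace ℝ (Fin d) → ℝ} (hf : ConvexOn ℝ Set.univ f)
    (x z : EuclideanSpace ℝ (Fin d)) {a : ℝ} (ha : 0 < a) :
    dirDeriv f x z ≤ (f (x + a • z) - f x) / a :=
  csInf_le (quotSet_bdd hf x z) ⟨a, ha, rfl⟩

private lemma le_dir {f : EuclideanSpace ℝ (Fin d) → ℝ}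
    (x z : EuclideanSpace ℝ (Fin d)) {c : ℝ}
    (h : ∀ a : ℝ, 0 < a → c ≤ (f (x + a • z) - f x) / a) :
    c ≤ dirDeriv f x z := by
  refine le_csInf (quotSet_nonempty f x z) ?_
  rintro _ ⟨a, ha, rfl⟩
  exact h a ha

private lemma dir_zero (f : EuclideanSpace ℝ (Fin d) → ℝ) (x : EuclideanSpace ℝ (Fin d)) :
    dirDeriv f x 0 = 0 := by
  unfold dirDeriv
  have : (fun lam : ℝ => (f (x + lam • (0:EuclideanSpace ℝ (Fin d))) - f x) / lam) '' Set.Ioi 0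
      = {0} := by
    ext t
    simp only [smul_zero, add_zero, sub_self, zero_div, Set.mem_image, Set.mem_singleton_iff]
    constructor
    · rintro ⟨a, _, rfl⟩; rfl
    · rintro rfl; exact ⟨1, by norm_num, rfl⟩
  rw [this, csInf_singleton]

private lemma dir_smul_pos {f : EuclideanSpace ℝ (Fin d) → ℝ} (hf : ConvexOn ℝ Set.univ f)
    (x z : EuclideanSpace ℝ (Fin d)) {t : ℝ} (ht : 0 < t) :
    dirDeriv f x (t • z) = t * dirDeriv f x z := by
  apply le_antisymm
  · rw [show t * dirDeriv f x z = t * dirDeriv f x z from rfl]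
    have h1 : dirDeriv f x (t • z) / t ≤ dirDeriv f x z := by
      apply le_dir
      intro a ha
      rw [div_le_iff₀ ht]
      have := dir_le_quot hf x (t • z) (a := a / t) (div_pos ha ht)
      calc dirDeriv f x (t • z) ≤ (f (x + (a / t) • t • z) - f x) / (a / t) := this
        _ = (f (x + a • z) - f x) / a * t := by
            rw [smul_smul, div_mul_cancel₀ _ ht.ne']
            field_simp
    rw [div_le_iff₀ ht] at h1
    linarith [h1]
  · apply le_dir
    intro a ha
    have := dir_le_quot hf x z (a := a * t) (mul_pos ha ht)
    have h2 : t * dirDeriv f x z ≤ t * ((f (x + (a * t) • z) - f x) / (a * t)) :=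
      mul_le_mul_of_nonneg_left this ht.le
    calc t * dirDeriv f x z ≤ t * ((f (x + (a * t) • z) - f x) / (a * t)) := h2
      _ = (f (x + a • t • z) - f x) / a := by
          rw [smul_smul, mul_comm a t]
          field_simp

private lemma quot_combo {f : EuclideanSpace ℝ (Fin d) → ℝ} (hf : ConvexOn ℝ Set.univ f)
    (x z w : EuclideanSpace ℝ (Fin d)) {a b lam : ℝ} (ha : 0 ≤ a) (hb : 0 ≤ b)
    (hab : a + b = 1) (hlam : 0 < lam) :
    (f (x + lam • (a • z + b • w)) - f x) / lam
      ≤ a * ((f (x + lam • z) - f x) / lam) + b * ((f (x + lam • w) - f x) / lam) := by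
  have key : f (x + lam • (a • z + b • w)) ≤ a * f (x + lam • z) + b * f (x + lam • w) := by
    have h := hf.2 (Set.mem_univ (x + lam • z)) (Set.mem_univ (x + lam • w)) ha hb hab
    have he : a • (x + lam • z) + b • (x + lam • w) = x + lam • (a • z + b • w) := by
      have h1 : a • x + b • x = x := by rw [← add_smul, hab, one_smul]
      calc a • (x + lam • z) + b • (x + lam • w)
          = (a • x + b • x) + lam • (a • z + b • w) := by module
        _ = x + lam • (a • z + b • w) := by rw [h1]
    rwa [he] at h
  rw [mul_div_assoc', mul_div_assoc', ← add_div, div_le_div_iff_of_pos_right hlam]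
  have h2 : a * f x + b * f x = f x := by rw [← add_mul, hab, one_mul]
  nlinarith [key, h2]


private lemma dir_convex {f : EuclideanSpace ℝ (Fin d) → ℝ} (hf : ConvexOn ℝ Set.univ f)
    (x : EuclideanSpace ℝ (Fin d)) : ConvexOn ℝ Set.univ (dirDeriv f x) := by
  refine ⟨convex_univ, ?_⟩
  rintro z - w - a b ha hb hab
  simp only [smul_eq_mul]
  rcases eq_or_lt_of_le ha with rfl | ha'
  · have hb1 : b = 1 := by linarith
    subst hb1; simp
  rcases eq_or_lt_of_le hb with rfl | hb'
  · have ha1 : a = 1 := by linarith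
    subst ha1; simp
  -- both positive
  have step1 : ∀ l1 l2 : ℝ, 0 < l1 → 0 < l2 →
      dirDeriv f x (a • z + b • w)
        ≤ a * ((f (x + l1 • z) - f x) / l1) + b * ((f (x + l2 • w) - f x) / l2) := by
    intro l1 l2 hl1 hl2
    set m := min l1 l2 with hm
    have hm0 : 0 < m := lt_min hl1 hl2
    have h1 : dirDeriv f x (a • z + b • w) ≤ (f (x + m • (a • z + b • w)) - f x) / m :=
      dir_le_quot hf x _ hm0
    have h2 := quot_combo hf x z w ha hb hab hm0
    have h3 : (f (x + m • z) - f x) / m ≤ (f (x + l1 • z) - f x) / l1 :=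
      quot_mono hf x z hm0 (min_le_left _ _)
    have h4 : (f (x + m • w) - f x) / m ≤ (f (x + l2 • w) - f x) / l2 :=
      quot_mono hf x w hm0 (min_le_right _ _)
    have := mul_le_mul_of_nonneg_left h3 ha
    have := mul_le_mul_of_nonneg_left h4 hb
    linarith
  have step2 : ∀ l2 : ℝ, 0 < l2 →
      dirDeriv f x (a • z + b • w) ≤ a * dirDeriv f x z + b * ((f (x + l2 • w) - f x) / l2) := by
    intro l2 hl2
    have : (dirDeriv f x (a • z + b • w) - b * ((f (x + l2 • w) - f x) / l2)) / a
        ≤ dirDeriv f x z := by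
      apply le_dir
      intro l1 hl1
      rw [div_le_iff₀ ha']
      have := step1 l1 l2 hl1 hl2
      linarith [this]
    rw [div_le_iff₀ ha'] at this
    linarith
  have : (dirDeriv f x (a • z + b • w) - a * dirDeriv f x z) / b ≤ dirDeriv f x w := by
    apply le_dir
    intro l2 hl2
    rw [div_le_iff₀ hb']
    linarith [step2 l2 hl2]
  rw [div_le_iff₀ hb'] at this
  linarith

private lemma deriv_line {g : EuclideanSpace ℝ (Fin d) → ℝ} {G : EuclideanSpace ℝ (Fin d) →L[ℝ] ℝ}
    {y : EuclideanSpace ℝ (Fin d)} (hd : HasFDerivAt g G y) (u : EuclideanSpace ℝ (Fin d)) :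
    HasDerivAt (fun t : ℝ => g (y + t • u)) (G u) 0 := by
  have h1 : HasDerivAt (fun t : ℝ => y + t • u) u 0 := by
    simpa using ((hasDerivAt_id (0:ℝ)).smul_const u).const_add y
  have h2 : HasFDerivAt g G ((fun t : ℝ => y + t • u) 0) := by simpa using hd
  exact h2.comp_hasDerivAt 0 h1

private lemma subgrad_of_convex {g : EuclideanSpace ℝ (Fin d) → ℝ}
    (hgc : ConvexOn ℝ Set.univ g) {G : EuclideanSpace ℝ (Fin d) →L[ℝ] ℝ}
    {y : EuclideanSpace ℝ (Fin d)} (hd : HasFDerivAt g G y) (z : EuclideanSpace ℝ (Fin d)) :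
    g y + G (z - y) ≤ g z := by
  set φ : ℝ → ℝ := fun t => g (y + t • (z - y)) with hφdef
  have hφ : HasDerivAt φ (G (z - y)) 0 := deriv_line hd (z - y)
  have hslope : Tendsto (slope φ 0) (𝓝[>] 0) (𝓝 (G (z - y))) :=
    (hasDerivAt_iff_tendsto_slope.1 hφ).mono_left
      (nhdsWithin_mono 0 (fun t ht => ne_of_gt ht))
  have hbound : ∀ᶠ t in 𝓝[>] (0:ℝ), slope φ 0 t ≤ g z - g y := by
    filter_upwards [Ioo_mem_nhdsGT_of_mem (Set.mem_Ico.2 ⟨le_refl 0, one_pos⟩)] with t ht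
    have ht0 : 0 < t := ht.1
    have ht1 : t < 1 := ht.2
    have hcombo : φ t ≤ (1 - t) * g y + t * g z := by
      have h := hgc.2 (Set.mem_univ y) (Set.mem_univ z) (by linarith : (0:ℝ) ≤ 1 - t)
        ht0.le (by ring)
      have he : (1 - t) • y + t • z = y + t • (z - y) := by module
      rw [he] at h
      simpa [hφdef] using h
    have hφ0 : φ 0 = g y := by simp [hφdef]
    rw [slope_def_field]
    rw [sub_zero, div_le_iff₀ ht0, hφ0]
    nlinarith [hcombo]
  have := le_of_tendsto hslope hbound
  linarith

private lemma subgrad_unique {g : EuclideanSpace ℝ (Fin d) → ℝ}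
    {G : EuclideanSpace ℝ (Fin d) →L[ℝ] ℝ} {y : EuclideanSpace ℝ (Fin d)}
    (hd : HasFDerivAt g G y) {v : EuclideanSpace ℝ (Fin d)}
    (hv : ∀ z, g y + ⟪v, z - y⟫ ≤ g z) (u : EuclideanSpace ℝ (Fin d)) : G u = ⟪v, u⟫ := by
  have key : ∀ t : ℝ, g y + t * ⟪v, u⟫ ≤ g (y + t • u) := by
    intro t
    have := hv (y + t • u)
    rwa [add_sub_cancel_left, real_inner_smul_right] at this
  set φ : ℝ → ℝ := fun t => g (y + t • u) with hφdef
  have hφ : HasDerivAt φ (G u) 0 := deriv_line hd u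
  have hφ0 : φ 0 = g y := by simp [hφdef]
  have h1 : ⟪v, u⟫ ≤ G u := by
    have hslope : Tendsto (slope φ 0) (𝓝[>] 0) (𝓝 (G u)) :=
      (hasDerivAt_iff_tendsto_slope.1 hφ).mono_left
        (nhdsWithin_mono 0 (fun t ht => ne_of_gt ht))
    refine ge_of_tendsto hslope ?_
    filter_upwards [self_mem_nhdsWithin] with t (ht : 0 < t)
    rw [slope_def_field, sub_zero, le_div_iff₀ ht, hφ0]
    have := key t
    nlinarith
  have h2 : G u ≤ ⟪v, u⟫ := by
    have hslope : Tendsto (slope φ 0) (𝓝[<] 0) (𝓝 (G u)) :=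
      (hasDerivAt_iff_tendsto_slope.1 hφ).mono_left
        (nhdsWithin_mono 0 (fun t ht => ne_of_lt ht))
    refine le_of_tendsto hslope ?_
    filter_upwards [self_mem_nhdsWithin] with t (ht : t < 0)
    rw [slope_def_field, sub_zero, div_le_iff_of_neg ht, hφ0]
    have := key t
    nlinarith
  linarith


private lemma subgrad_bound {f : EuclideanSpace ℝ (Fin d) → ℝ} (hf : ConvexOn ℝ Set.univ f)
    (x y : EuclideanSpace ℝ (Fin d)) :
    ∃ M : ℝ, ∀ ε ∈ Set.Ioc (0:ℝ) 1, ∀ w, IsSubgradientAt f (x + ε • y) w → ‖w‖ ≤ M := by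
  have hcont : Continuous f := by
    have h := hf.continuousOn isOpen_univ
    rw [← continuousOn_univ]; exact h
  have hK : IsCompact (Metric.closedBall x (‖y‖ + 1)) := isCompact_closedBall _ _
  have hKne : (Metric.closedBall x (‖y‖ + 1)).Nonempty :=
    ⟨x, Metric.mem_closedBall_self (by positivity)⟩
  obtain ⟨p2, _, hp2⟩ := hK.exists_isMaxOn hKne hcont.continuousOn
  obtain ⟨p1, _, hp1⟩ := hK.exists_isMinOn hKne hcont.continuousOn
  refine ⟨max (f p2 - f p1) 0, ?_⟩
  rintro ε ⟨hε0, hε1⟩ w hw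
  have hxε : x + ε • y ∈ Metric.closedBall x (‖y‖ + 1) := by
    rw [Metric.mem_closedBall, dist_eq_norm, add_sub_cancel_left, norm_smul,
      Real.norm_eq_abs, abs_of_pos hε0]
    nlinarith [norm_nonneg y]
  rcases eq_or_ne w 0 with rfl | hw0
  · simp
  have hwpos : 0 < ‖w‖ := norm_pos_iff.2 hw0
  set u := ‖w‖⁻¹ • w with hu
  have hunorm : ‖u‖ = 1 := by
    rw [hu, norm_smul, Real.norm_eq_abs, abs_of_pos (by positivity), inv_mul_cancel₀ hwpos.ne']
  have hz : x + ε • y + u ∈ Metric.closedBall x (‖y‖ + 1) := by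
    rw [Metric.mem_closedBall, dist_eq_norm]
    have : x + ε • y + u - x = ε • y + u := by module
    rw [this]
    calc ‖ε • y + u‖ ≤ ‖ε • y‖ + ‖u‖ := norm_add_le _ _
      _ ≤ ‖y‖ + 1 := by
          rw [hunorm, norm_smul, Real.norm_eq_abs, abs_of_pos hε0]
          nlinarith [norm_nonneg y]
  have hinner : ⟪w, u⟫ = ‖w‖ := by
    rw [hu, real_inner_smul_right, real_inner_self_eq_norm_mul_norm]
    field_simp
  have h := hw (x + ε • y + u)
  rw [add_sub_cancel_left, hinner] at h
  have : ‖w‖ ≤ f p2 - f p1 := by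
    have h2 := hp2 hz
    have h3 := hp1 hxε
    simp only [Set.mem_setOf_eq] at h2 h3
    linarith
  exact this.trans (le_max_left _ _)

private lemma key_ineq {f : EuclideanSpace ℝ (Fin d) → ℝ} (hf : ConvexOn ℝ Set.univ f)
    (x y z : EuclideanSpace ℝ (Fin d)) {ε ε₀ : ℝ} (hε : 0 < ε) (hεε : ε ≤ ε₀)
    {w : EuclideanSpace ℝ (Fin d)} (hw : IsSubgradientAt f (x + ε • y) w) :
    dirDeriv f x y + ⟪w, z - y⟫ ≤ (f (x + ε₀ • z) - f x) / ε₀ := by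
  have h1 := hw (x + ε • z)
  have he : x + ε • z - (x + ε • y) = ε • (z - y) := by module
  rw [he, real_inner_smul_right] at h1
  have h2 : ε * dirDeriv f x y ≤ f (x + ε • y) - f x := by
    have := dir_le_quot hf x y hε
    rwa [le_div_iff₀ hε, mul_comm] at this
  have h3 : (f (x + ε • z) - f x) / ε ≤ (f (x + ε₀ • z) - f x) / ε₀ :=
    quot_mono hf x z hε hεε
  have h4 : dirDeriv f x y + ⟪w, z - y⟫ ≤ (f (x + ε • z) - f x) / ε := by
    rw [le_div_iff₀ hε]
    nlinarith
  linarith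

/-- If `g := Df(x)[·]` is differentiable at `y`, then for every choice of subgradients
`v_ε ∈ ∂f(x + εy)` the limit `lim_{ε↓0} v_ε` exists, is the same for all selections,
belongs to `∂f(x)`, and under the normalization `f(x) = 0`, `g(y) = 0`, `∇g(y) = 0`,
the limit equals `0`. -/
theorem stmt_10 {d : ℕ} (f : EuclideanSpace ℝ (Fin d) → ℝ)
    (hf : ConvexOn ℝ Set.univ f) (x y : EuclideanSpace ℝ (Fin d))
    (hg : DifferentiableAt ℝ (dirDeriv f x) y) :
    ∃ L : EuclideanSpace ℝ (Fin d),
      IsSubgradientAt f x L ∧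
      (∀ v : ℝ → EuclideanSpace ℝ (Fin d),
        (∀ ε : ℝ, 0 < ε → IsSubgradientAt f (x + ε • y) (v ε)) →
          Tendsto v (𝓝[>] (0 : ℝ)) (𝓝 L)) ∧
      ((f x = 0 ∧ dirDeriv f x y = 0 ∧ gradient (dirDeriv f x) y = 0) → L = 0) := by
  classical
  have hgc : ConvexOn ℝ Set.univ (dirDeriv f x) := dir_convex hf x
  have hd : HasFDerivAt (dirDeriv f x) (fderiv ℝ (dirDeriv f x) y) y := hg.hasFDerivAt
  set G := fderiv ℝ (dirDeriv f x) y with hGdef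
  set L := gradient (dirDeriv f x) y with hLdef
  have hGL : ∀ u, ⟪L, u⟫ = G u := by
    intro u
    rw [hLdef, gradient]
    exact InnerProductSpace.toDual_symm_apply
  have hsub : ∀ z, dirDeriv f x y + ⟪L, z - y⟫ ≤ dirDeriv f x z := by
    intro z
    rw [hGL]
    exact subgrad_of_convex hgc hd z
  have hLy : ⟪L, y⟫ = dirDeriv f x y := by
    have e1 := hsub ((2:ℝ) • y)
    rw [dir_smul_pos hf x y two_pos, show (2:ℝ) • y - y = y by module] at e1
    have e2 := hsub 0
    rw [dir_zero, zero_sub, inner_neg_right] at e2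
    linarith
  have hlin : ∀ z, ⟪L, z⟫ ≤ dirDeriv f x z := by
    intro z
    have := hsub z
    rw [inner_sub_right] at this
    linarith
  refine ⟨L, ?_, ?_, ?_⟩
  · -- subgradient at x
    intro z
    have h1 := hlin (z - x)
    have h2 : dirDeriv f x (z - x) ≤ f z - f x := by
      have := dir_le_quot hf x (z - x) one_pos
      simpa using this
    linarith
  · -- convergence
    intro v hv
    obtain ⟨M, hM⟩ := subgrad_bound hf x y
    refine tendsto_of_subseq_tendsto ?_
    intro ns hns
    have h01 : ∀ᶠ n in atTop, ns n ∈ Set.Ioc (0:ℝ) 1 :=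
      hns (Ioc_mem_nhdsGT_of_mem (Set.mem_Ico.2 ⟨le_refl 0, one_pos⟩))
    obtain ⟨N, hN⟩ := eventually_atTop.1 h01
    have hmem : ∀ n : ℕ, v (ns (n + N)) ∈ Metric.closedBall (0 : EuclideanSpace ℝ (Fin d)) M := by
      intro n
      have h := hN (n + N) (Nat.le_add_left _ _)
      have := hM _ h _ (hv _ h.1)
      simpa [mem_closedBall_zero_iff] using this
    obtain ⟨a, -, φ, hφ, hconv⟩ := (isCompact_closedBall _ _).tendsto_subseq hmem
    have hasub : ∀ z, dirDeriv f x y + ⟪a, z - y⟫ ≤ dirDeriv f x z := by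
      intro z
      apply le_dir
      intro ε₀ hε₀
      have hinner : Tendsto (fun n => dirDeriv f x y + ⟪v (ns (φ n + N)), z - y⟫) atTop
          (𝓝 (dirDeriv f x y + ⟪a, z - y⟫)) := by
        refine tendsto_const_nhds.add ?_
        exact Filter.Tendsto.inner hconv tendsto_const_nhds
      refine le_of_tendsto hinner ?_
      obtain ⟨N₂, hN₂⟩ := eventually_atTop.1
        (hns (Ioc_mem_nhdsGT_of_mem (Set.mem_Ico.2 ⟨le_refl 0, hε₀⟩)))
      filter_upwards [eventually_ge_atTop N₂] with n hn
      have hm : N₂ ≤ φ n + N := le_trans (le_trans hn hφ.le_apply) (Nat.le_add_right _ _)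
      have hc := hN₂ _ hm
      exact key_ineq hf x y z hc.1 hc.2 (hv _ hc.1)
    have haL : a = L := by
      have huniq := subgrad_unique hd hasub
      refine ext_inner_right ℝ ?_
      intro u
      rw [hGL u, ← huniq u]
    refine ⟨fun n => φ n + N, ?_⟩
    rw [← haL]
    exact hconv
  · rintro ⟨-, -, h3⟩
    exact h3
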